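/- Let n ≥ 2, let 0 < α < n^{−8·log n} be a threshold, and let G be a random n×d matrix whose entries are independent, each with law (h/n)·N(0,1) + (1 − h/n)·δ₀, where 0 < h ≤ n and h·d > 20·n·(log n)·log(1/α). Then every (fixed, deterministic) unit vector w ∈ ℝⁿ having at least d/(40·log n) entries of absolute value at least n^{−4·log n} satisfies P(‖Gᵀw‖₂ < α) < α^{d/5}. -/

import Mathlib

open MeasureTheory ProbabilityTheory Matrix
open scoped ENNReal NNReal

/-- Euclidean norm of a vector. -/
noncomputable def vnorm {ι : Type*} [Fintype ι] (v : ι → ℝ) : ℝ :=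
  Real.sqrt (∑ i, v i ^ 2)

/-- The mixture law `q·N(0,1) + (1−q)·δ₀`. -/
noncomputable def mixLaw (q : ℝ) : Measure ℝ :=
  ENNReal.ofReal q • gaussianReal 0 1 + ENNReal.ofReal (1 - q) • Measure.dirac 0

lemma mixLaw_apply (q : ℝ) (s : Set ℝ) :
    mixLaw q s = ENNReal.ofReal q * gaussianReal 0 1 s
      + ENNReal.ofReal (1 - q) * Measure.dirac 0 s := by
  simp [mixLaw]

lemma mixLaw_isProb {q : ℝ} (h0 : 0 ≤ q) (h1 : q ≤ 1) : IsProbabilityMeasure (mixLaw q) := by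
  constructor
  rw [mixLaw_apply]
  simp only [measure_univ, mul_one]
  rw [← ENNReal.ofReal_add h0 (by linarith)]
  norm_num

lemma gaussianReal_le_half_volume (s : Set ℝ) :
    gaussianReal 0 1 s ≤ ENNReal.ofReal (1/2) * volume s := by
  rw [gaussianReal_apply 0 one_ne_zero s]
  have hb : ∀ x : ℝ, gaussianPDF 0 1 x ≤ ENNReal.ofReal (1/2) := by
    intro x
    refine ENNReal.ofReal_le_ofReal ?_
    unfold gaussianPDFReal
    have h2pi : (2:ℝ) ≤ Real.sqrt (2 * Real.pi * (1:NNReal)) := by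
      rw [show ((1:NNReal):ℝ) = 1 by norm_num, mul_one]
      have hs := Real.sq_sqrt (show (0:ℝ) ≤ 2 * Real.pi by positivity)
      nlinarith [Real.sqrt_nonneg (2 * Real.pi), Real.pi_gt_three]
    have he : Real.exp (-(x - 0)^2 / (2 * (1:NNReal))) ≤ 1 := by
      rw [Real.exp_le_one_iff]
      have : (0:ℝ) ≤ (x-0)^2 := sq_nonneg _
      have h1 : ((1:NNReal):ℝ) = 1 := by norm_num
      rw [h1]
      nlinarith
    have hinv : (Real.sqrt (2 * Real.pi * (1:NNReal)))⁻¹ ≤ 1/2 := by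
      rw [one_div]
      exact inv_anti₀ (by norm_num) h2pi
    calc (Real.sqrt (2 * Real.pi * (1:NNReal)))⁻¹ * Real.exp (-(x - 0)^2 / (2 * (1:NNReal)))
        ≤ (Real.sqrt (2 * Real.pi * (1:NNReal)))⁻¹ * 1 := by
          apply mul_le_mul_of_nonneg_left he (by positivity)
      _ ≤ 1/2 := by rw [mul_one]; exact hinv
  calc ∫⁻ x in s, gaussianPDF 0 1 x ≤ ∫⁻ _x in s, ENNReal.ofReal (1/2) :=
        lintegral_mono hb
    _ = ENNReal.ofReal (1/2) * volume s := by rw [setLIntegral_const]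

lemma log_three_halves_le : Real.log (3/2) ≤ 0.42 := by
  rw [Real.log_le_iff_le_exp (by norm_num)]
  calc (3/2:ℝ) ≤ 1.0525^8 := by norm_num
    _ ≤ Real.exp 0.0525 ^ 8 := by
        apply pow_le_pow_left₀ (by norm_num)
        nlinarith [Real.add_one_le_exp (0.0525:ℝ)]
    _ = Real.exp 0.42 := by rw [← Real.exp_nat_mul]; norm_num

lemma one_add_le_exp_sq_log {n : ℕ} (hn : 2 ≤ n) :
    (1 + (n:ℝ)) ≤ Real.exp ((12/5) * (Real.log n)^2) := by
  have hn2 : (2:ℝ) ≤ n := by exact_mod_cast hn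
  have hn0 : (0:ℝ) < n := by linarith
  have hlnpos : 0 < Real.log n := Real.log_pos (by linarith)
  have h1 : (1:ℝ) + n ≤ (3/2) * n := by nlinarith
  have h2 : Real.log (1 + n) ≤ Real.log (3/2) + Real.log n := by
    calc Real.log (1 + n) ≤ Real.log ((3/2) * n) := Real.log_le_log (by positivity) h1
      _ = Real.log (3/2) + Real.log n := Real.log_mul (by norm_num) (by positivity)
  have hln : Real.log 2 ≤ Real.log n := Real.log_le_log (by norm_num) hn2
  have hl2 : (0.6931471803:ℝ) < Real.log 2 := Real.log_two_gt_d9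
  have h3 : Real.log (3/2) + Real.log n ≤ (12/5) * (Real.log n)^2 := by
    nlinarith [log_three_halves_le, mul_nonneg (sub_nonneg.mpr hln) hlnpos.le]
  rw [← Real.exp_log (show (0:ℝ) < 1 + n by linarith)]
  exact Real.exp_le_exp.mpr (h2.trans h3)

set_option maxHeartbeats 1000000 in
/-- **A sparse Gaussian matrix clobbers any fixed dense vector.**
Let `n ≥ 2`, `0 < α < n^{−8·log n}`, `0 < h ≤ n` with `h·d > 20·n·(log n)·log(1/α)`, and let
`G` be a random `n×d` matrix with independent entries of law `(h/n)·N(0,1) + (1 − h/n)·δ₀`.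
Then any fixed unit vector `w ∈ ℝⁿ` with at least `d/(40·log n)` entries of absolute value at
least `n^{−4·log n}` satisfies `P(‖Gᵀw‖₂ < α) < α^{d/5}`. -/
theorem sparse_gaussian_clobbers_dense_vector
    {Ω : Type*} [MeasurableSpace Ω] (μ : Measure Ω) [IsProbabilityMeasure μ]
    (n d : ℕ) (hn : 2 ≤ n)
    (α : ℝ) (hα0 : 0 < α) (hα1 : α < (n : ℝ) ^ (-(8 * Real.log n)))
    (h : ℝ) (hh0 : 0 < h) (hhn : h ≤ n)
    (hhd : 20 * n * Real.log n * Real.log (1 / α) < h * d)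
    (G : Ω → Matrix (Fin n) (Fin d) ℝ)
    (hGmeas : ∀ i j, Measurable fun ω => G ω i j)
    (hGindep : iIndepFun
      (fun (e : Fin n × Fin d) (ω : Ω) => G ω e.1 e.2) μ)
    (hGlaw : ∀ i j, Measure.map (fun ω => G ω i j) μ = mixLaw (h / n))
    (w : Fin n → ℝ) (hw : vnorm w = 1)
    (hwdense : (d : ℝ) / (40 * Real.log n) ≤
      ((Finset.univ.filter fun i => (n : ℝ) ^ (-(4 * Real.log n)) ≤ |w i|).card : ℝ)) :
    μ {ω | vnorm ((G ω)ᵀ.mulVec w) < α} < ENNReal.ofReal (α ^ ((d : ℝ) / 5)) := by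
  classical
  have hn2 : (2:ℝ) ≤ n := by exact_mod_cast hn
  have hn0 : (0:ℝ) < n := by linarith
  have hn1 : (1:ℝ) < n := by linarith
  have hlogn : 0 < Real.log n := Real.log_pos hn1
  have hα1' : α < 1 := by
    refine lt_of_lt_of_le hα1 ?_
    exact Real.rpow_le_one_of_one_le_of_nonpos hn1.le (by nlinarith)
  have hL : 0 < Real.log (1/α) := Real.log_pos (by rw [lt_div_iff₀ hα0]; linarith)
  have hd0 : d ≠ 0 := by
    rintro rfl
    simp only [Nat.cast_zero, mul_zero] at hhd
    nlinarith [mul_pos (mul_pos (mul_pos (by norm_num : (0:ℝ) < 20) hn0) hlogn) hL]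
  set q := h / n with hq
  have hq0 : 0 < q := div_pos hh0 hn0
  have hq1 : q ≤ 1 := (div_le_one hn0).mpr hhn
  haveI hPmix : IsProbabilityMeasure (mixLaw q) := mixLaw_isProb hq0.le hq1
  set νn : Measure (Fin n → ℝ) := Measure.pi (fun _ => mixLaw q) with hνn
  haveI : IsProbabilityMeasure νn := by
    constructor
    rw [hνn, Measure.pi_univ]
    simp [measure_univ]
  set τ : ℝ := (n:ℝ) ^ (-(4 * Real.log n)) with hτ
  have hτ0 : 0 < τ := Real.rpow_pos_of_pos hn0 _
  set D : Finset (Fin n) := Finset.univ.filter (fun i => τ ≤ |w i|) with hD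
  set A : Set (Fin n → ℝ) := {v | |∑ i, v i * w i| < α} with hA
  have hAmeas : MeasurableSet A := by
    have hmeas : Measurable fun v : Fin n → ℝ => |∑ i, v i * w i| := by
      apply Measurable.abs
      apply Finset.measurable_sum
      intro i _
      exact (measurable_pi_apply i).mul_const _
    exact hmeas measurableSet_Iio
  set Φ : Ω → (Fin d → Fin n → ℝ) := fun ω j i => G ω i j with hΦ
  have hΦmeas : Measurable Φ := by
    apply measurable_pi_lambda; intro j; apply measurable_pi_lambda; intro i
    exact hGmeas i j
  -- the joint law of the columns is the product measure
  have hjoint : Measure.pi (fun _ : Fin d => νn) = Measure.map Φ μ := by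
    refine Measure.pi_eq_generateFrom (fun _ => generateFrom_pi) (fun _ => isPiSystem_pi)
      (fun _ => ⟨fun _ => Set.univ,
        fun _ => ⟨fun _ => Set.univ, fun i _ => MeasurableSet.univ, Set.pi_univ _⟩,
        fun _ => by simp [measure_univ], Set.iUnion_const _⟩) ?_
    intro s hs
    choose t ht hts using hs
    have htmeas : ∀ j i, MeasurableSet (t j i) := fun j i => ht j i (Set.mem_univ i)
    have hsmeas : ∀ j, MeasurableSet (s j) := by
      intro j; rw [← hts j]; exact MeasurableSet.univ_pi (htmeas j)
    rw [Measure.map_apply hΦmeas (MeasurableSet.univ_pi hsmeas)]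
    have hpre : Φ ⁻¹' (Set.pi Set.univ s) =
        ⋂ e : Fin n × Fin d, (fun ω => G ω e.1 e.2) ⁻¹' (t e.2 e.1) := by
      ext ω
      simp only [Set.mem_preimage, Set.mem_pi, Set.mem_univ, forall_true_left, Set.mem_iInter]
      constructor
      · intro H e
        have := H e.2
        rw [← hts e.2] at this
        exact this e.1 (Set.mem_univ _)
      · intro H j
        rw [← hts j]
        intro i _
        exact H (i, j)
    rw [hpre]
    rw [hGindep.meas_iInter (fun e => ⟨t e.2 e.1, htmeas e.2 e.1, rfl⟩)]
    have hval : ∀ e : Fin n × Fin d,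
        μ ((fun ω => G ω e.1 e.2) ⁻¹' (t e.2 e.1)) = mixLaw q (t e.2 e.1) := by
      intro e
      rw [← hGlaw e.1 e.2, Measure.map_apply (hGmeas e.1 e.2) (htmeas e.2 e.1)]
    simp_rw [hval]
    rw [Fintype.prod_prod_type]
    rw [Finset.prod_comm]
    refine Finset.prod_congr rfl fun j _ => ?_
    rw [← hts j, hνn, Measure.pi_pi]
  -- the event is contained in the "all columns small" box
  have hsub : {ω | vnorm ((G ω)ᵀ.mulVec w) < α} ⊆
      Φ ⁻¹' (Set.pi Set.univ fun _ : Fin d => A) := by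
    intro ω hω
    simp only [Set.mem_setOf_eq] at hω
    simp only [Set.mem_preimage, Set.mem_pi, Set.mem_univ, forall_true_left]
    intro j
    have hcoord : ((G ω)ᵀ.mulVec w j) = ∑ i, G ω i j * w i := by
      simp [Matrix.mulVec, dotProduct, Matrix.transpose_apply]
    have h1 : ((G ω)ᵀ.mulVec w j)^2 ≤ ∑ j', ((G ω)ᵀ.mulVec w j')^2 :=
      Finset.single_le_sum (f := fun j' => ((G ω)ᵀ.mulVec w j')^2)
        (fun _ _ => sq_nonneg _) (Finset.mem_univ j)
    have h2 : |(G ω)ᵀ.mulVec w j| ≤ vnorm ((G ω)ᵀ.mulVec w) := by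
      rw [← Real.sqrt_sq_eq_abs]
      unfold vnorm
      exact Real.sqrt_le_sqrt h1
    have h3 : |∑ i, G ω i j * w i| < α := by
      rw [← hcoord]; exact lt_of_le_of_lt h2 hω
    simpa [hA, hΦ] using h3
  -- core single-column bound
  have hhalf : α ^ (2⁻¹:ℝ) ≤ τ := by
    calc α ^ (2⁻¹:ℝ) ≤ ((n:ℝ) ^ (-(8 * Real.log n))) ^ (2⁻¹:ℝ) :=
          Real.rpow_le_rpow hα0.le hα1.le (by norm_num)
      _ = τ := by
          rw [← Real.rpow_mul hn0.le, hτ]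
          congr 1
          ring
  have hατ : α * τ⁻¹ ≤ α ^ (2⁻¹:ℝ) := by
    have hαsq : α = α ^ (2⁻¹:ℝ) * α ^ (2⁻¹:ℝ) := by
      rw [← Real.rpow_add hα0]
      norm_num
    have hrp : 0 < α ^ (2⁻¹:ℝ) := Real.rpow_pos_of_pos hα0 _
    calc α * τ⁻¹ = α ^ (2⁻¹:ℝ) * (α ^ (2⁻¹:ℝ) * τ⁻¹) := by rw [← mul_assoc, ← hαsq]
      _ ≤ α ^ (2⁻¹:ℝ) * (τ * τ⁻¹) := by
          apply mul_le_mul_of_nonneg_left _ hrp.le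
          exact mul_le_mul_of_nonneg_right hhalf (by positivity)
      _ = α ^ (2⁻¹:ℝ) := by
          rw [mul_inv_cancel₀ (ne_of_gt hτ0), mul_one]
  have hcore : νn A ≤ ENNReal.ofReal ((1 + n) * α ^ (2⁻¹:ℝ)) := by
    set E0 : Set (Fin n → ℝ) := {v | ∀ i ∈ D, v i = 0} with hE0
    have hcover : A ⊆ E0 ∪ ⋃ i ∈ D, (A ∩ {v | v i ≠ 0}) := by
      intro v hv
      by_cases hc : ∀ i ∈ D, v i = 0
      · exact Or.inl hc
      · push_neg at hc
        obtain ⟨i, hiD, hvi⟩ := hc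
        exact Or.inr (Set.mem_biUnion hiD ⟨hv, hvi⟩)
    have hE0val : νn E0 ≤ ENNReal.ofReal (α ^ (2⁻¹:ℝ)) := by
      have hE0pi : E0 = Set.pi Set.univ (fun i => if i ∈ D then ({0}:Set ℝ) else Set.univ) := by
        ext v
        simp only [hE0, Set.mem_setOf_eq, Set.mem_pi, Set.mem_univ, forall_true_left]
        constructor
        · intro H i
          by_cases hi : i ∈ D
          · simp [hi, H i hi]
          · simp [hi]
        · intro H i hi
          have := H i
          simpa [hi] using this
      have hmix0 : mixLaw q ({0}:Set ℝ) = ENNReal.ofReal (1 - q) := by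
        rw [mixLaw_apply]
        have hg : gaussianReal 0 1 ({0}:Set ℝ) = 0 :=
          (gaussianReal_absolutelyContinuous 0 one_ne_zero) Real.volume_singleton
        rw [hg, Measure.dirac_apply_of_mem (Set.mem_singleton (0:ℝ))]
        simp
      have hE0eq : νn E0 = ENNReal.ofReal (1 - q) ^ D.card := by
        rw [hE0pi, hνn, Measure.pi_pi]
        have hpt : ∀ i : Fin n, mixLaw q (if i ∈ D then ({0}:Set ℝ) else Set.univ)
            = if i ∈ D then ENNReal.ofReal (1 - q) else 1 := by
          intro i
          split_ifs
          · exact hmix0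
          · exact measure_univ
        simp_rw [hpt]
        rw [Finset.prod_ite_mem, Finset.univ_inter, Finset.prod_const]
      rw [hE0eq]
      rw [← ENNReal.ofReal_pow (by linarith : (0:ℝ) ≤ 1 - q)]
      apply ENNReal.ofReal_le_ofReal
      -- real inequality : (1-q)^card ≤ α^(1/2)
      have h1q : 1 - q ≤ Real.exp (-q) := by nlinarith [Real.add_one_le_exp (-q)]
      have hqm : Real.log (1/α) / 2 ≤ q * D.card := by
        have e1 : q * ((d:ℝ) / (40 * Real.log n)) ≤ q * D.card :=
          mul_le_mul_of_nonneg_left hwdense hq0.le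
        have e2 : Real.log (1/α) / 2 ≤ q * ((d:ℝ) / (40 * Real.log n)) := by
          rw [hq, div_mul_div_comm, div_le_div_iff₀ (by norm_num) (by positivity)]
          nlinarith
        linarith
      have hlogα : Real.log (1/α) = -Real.log α := by rw [one_div, Real.log_inv]
      calc (1 - q) ^ D.card ≤ Real.exp (-q) ^ D.card :=
            pow_le_pow_left₀ (by linarith) h1q _
        _ = Real.exp ((D.card : ℝ) * (-q)) := by rw [← Real.exp_nat_mul]
        _ ≤ Real.exp (Real.log α * 2⁻¹) := by
            apply Real.exp_le_exp.mpr
            rw [hlogα] at hqm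
            nlinarith
        _ = α ^ (2⁻¹:ℝ) := (Real.rpow_def_of_pos hα0 _).symm
    have hBval : ∀ i ∈ D, νn (A ∩ {v | v i ≠ 0}) ≤ ENNReal.ofReal (α * τ⁻¹) := by
      intro i hiD
      have hwi : τ ≤ |w i| := (Finset.mem_filter.mp hiD).2
      have hwin : w i ≠ 0 := by
        intro h0
        rw [h0, abs_zero] at hwi
        linarith
      set B : Set (Fin n → ℝ) := A ∩ {v | v i ≠ 0} with hB
      have h0meas : MeasurableSet {v : Fin n → ℝ | v i ≠ 0} := by
        have hrw : {v : Fin n → ℝ | v i ≠ 0} = (fun v : Fin n → ℝ => v i) ⁻¹' ({(0:ℝ)}ᶜ) := rfl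
        rw [hrw]
        exact (measurable_pi_apply i) (measurableSet_singleton (0:ℝ)).compl
      have hBmeas : MeasurableSet B := hAmeas.inter h0meas
      -- the per-slice bound
      have hslice : ∀ x : Fin n → ℝ,
          ∫⁻ t, B.indicator (fun _ => (1:ℝ≥0∞)) (Function.update x i t) ∂(mixLaw q)
            ≤ ENNReal.ofReal (α * τ⁻¹) := by
        intro x
        set c₀ : ℝ := ∑ k ∈ Finset.univ \ {i}, x k * w k with hc₀
        have hupd : ∀ t : ℝ, ∑ k, Function.update x i t k * w k = t * w i + c₀ := by
          intro t
          have hfe : ∀ k, Function.update x i t k * w k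
              = Function.update (fun k => x k * w k) i (t * w i) k := by
            intro k
            rcases eq_or_ne k i with rfl | hk
            · simp
            · simp [Function.update_of_ne hk]
          rw [Finset.sum_congr rfl (fun k _ => hfe k)]
          exact Finset.sum_update_of_mem (Finset.mem_univ i) _ _
        set S : Set ℝ := {t : ℝ | t ≠ 0 ∧ t * w i ∈ Set.Ioo (-α - c₀) (α - c₀)} with hS
        have hSmeas : MeasurableSet S := by
          apply ((measurableSet_singleton (0:ℝ)).compl).inter
          exact measurableSet_Ioo.preimage (measurable_id.mul_const _)
        have hindeq : ∀ t : ℝ, B.indicator (fun _ => (1:ℝ≥0∞)) (Function.update x i t)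
            = S.indicator (fun _ => (1:ℝ≥0∞)) t := by
          intro t
          rw [Set.indicator_apply, Set.indicator_apply]
          have hiff : Function.update x i t ∈ B ↔ t ∈ S := by
            rw [hB, hS]
            simp only [Set.mem_inter_iff, Set.mem_setOf_eq, hA, Function.update_self,
              Set.mem_Ioo, hupd t, abs_lt]
            constructor
            · rintro ⟨⟨h1, h2⟩, h3⟩
              exact ⟨h3, by linarith, by linarith⟩
            · rintro ⟨h3, h1, h2⟩
              exact ⟨⟨by linarith, by linarith⟩, h3⟩
          simp [hiff]
        calc ∫⁻ t, B.indicator (fun _ => (1:ℝ≥0∞)) (Function.update x i t) ∂(mixLaw q)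
            = ∫⁻ t, S.indicator (fun _ => (1:ℝ≥0∞)) t ∂(mixLaw q) :=
              lintegral_congr hindeq
          _ = mixLaw q S := by
              rw [lintegral_indicator hSmeas, setLIntegral_one]
          _ ≤ ENNReal.ofReal (α * τ⁻¹) := by
              rw [mixLaw_apply]
              have hdir : Measure.dirac (0:ℝ) S = 0 := by
                rw [Measure.dirac_apply' _ hSmeas]
                simp [hS]
              have hsub' : S ⊆ (· * w i) ⁻¹' Set.Ioo (-α - c₀) (α - c₀) := fun t ht => ht.2
              have hvol : volume ((· * w i) ⁻¹' Set.Ioo (-α - c₀) (α - c₀))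
                  = ENNReal.ofReal |(w i)⁻¹| * ENNReal.ofReal (2 * α) := by
                rw [Real.volume_preimage_mul_right hwin, Real.volume_Ioo]
                congr 1
                ring
              have hgauss : gaussianReal 0 1 S
                  ≤ ENNReal.ofReal (1/2) * (ENNReal.ofReal |(w i)⁻¹| * ENNReal.ofReal (2 * α)) := by
                calc gaussianReal 0 1 S
                    ≤ gaussianReal 0 1 ((· * w i) ⁻¹' Set.Ioo (-α - c₀) (α - c₀)) :=
                      measure_mono hsub'
                  _ ≤ ENNReal.ofReal (1/2) * volume ((· * w i) ⁻¹' Set.Ioo (-α - c₀) (α - c₀)) :=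
                      gaussianReal_le_half_volume _
                  _ = ENNReal.ofReal (1/2) * (ENNReal.ofReal |(w i)⁻¹| * ENNReal.ofReal (2 * α)) := by
                      rw [hvol]
              calc ENNReal.ofReal q * gaussianReal 0 1 S + ENNReal.ofReal (1 - q) * Measure.dirac 0 S
                  ≤ ENNReal.ofReal q * (ENNReal.ofReal (1/2) * (ENNReal.ofReal |(w i)⁻¹|
                      * ENNReal.ofReal (2 * α))) + 0 := by
                    rw [hdir, mul_zero]
                    exact add_le_add_left (mul_le_mul_right hgauss _) _
                _ = ENNReal.ofReal (q * (1/2 * (|(w i)⁻¹| * (2 * α)))) := by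
                    rw [add_zero, ← ENNReal.ofReal_mul (by positivity),
                      ← ENNReal.ofReal_mul (by positivity), ← ENNReal.ofReal_mul hq0.le]
                _ ≤ ENNReal.ofReal (α * τ⁻¹) := by
                    apply ENNReal.ofReal_le_ofReal
                    rw [abs_inv]
                    have hwi' : |w i|⁻¹ ≤ τ⁻¹ := inv_anti₀ hτ0 hwi
                    have hq1' : q * (1/2 * (|w i|⁻¹ * (2 * α))) = q * α * |w i|⁻¹ := by ring
                    rw [hq1']
                    calc q * α * |w i|⁻¹ ≤ 1 * α * τ⁻¹ := by
                          apply mul_le_mul (mul_le_mul hq1 le_rfl hα0.le (by norm_num)) hwi'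
                            (by positivity) (by positivity)
                      _ = α * τ⁻¹ := by ring
      -- assemble via marginal integrals
      have hνB : νn B = ∫⁻ v, B.indicator (fun _ => (1:ℝ≥0∞)) v ∂(Measure.pi fun _ => mixLaw q) := by
        rw [lintegral_indicator hBmeas, setLIntegral_one, hνn]
      have hconst : ∫⁻ _v, ENNReal.ofReal (α * τ⁻¹) ∂(Measure.pi (fun _ : Fin n => mixLaw q))
          = ENNReal.ofReal (α * τ⁻¹) := by
        rw [lintegral_const]
        simp [measure_univ]
      rw [hνB, ← hconst]
      apply lintegral_le_of_lmarginal_le {i} (measurable_const.indicator hBmeas) measurable_const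
      rw [Pi.le_def]
      intro x
      rw [lmarginal_singleton, lmarginal_singleton]
      calc ∫⁻ t, B.indicator (fun _ => (1:ℝ≥0∞)) (Function.update x i t) ∂(mixLaw q)
          ≤ ENNReal.ofReal (α * τ⁻¹) := hslice x
        _ = ∫⁻ _t, ENNReal.ofReal (α * τ⁻¹) ∂(mixLaw q) := by
            rw [lintegral_const]
            simp [measure_univ]
    calc νn A ≤ νn (E0 ∪ ⋃ i ∈ D, (A ∩ {v | v i ≠ 0})) := measure_mono hcover
      _ ≤ νn E0 + νn (⋃ i ∈ D, (A ∩ {v | v i ≠ 0})) := measure_union_le _ _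
      _ ≤ νn E0 + ∑ i ∈ D, νn (A ∩ {v | v i ≠ 0}) := by
          gcongr
          exact measure_biUnion_finset_le D _
      _ ≤ ENNReal.ofReal (α ^ (2⁻¹:ℝ)) + ∑ i ∈ D, ENNReal.ofReal (α * τ⁻¹) :=
          add_le_add hE0val (Finset.sum_le_sum hBval)
      _ = ENNReal.ofReal (α ^ (2⁻¹:ℝ)) + (D.card : ℝ≥0∞) * ENNReal.ofReal (α * τ⁻¹) := by
          rw [Finset.sum_const, nsmul_eq_mul]
      _ ≤ ENNReal.ofReal (α ^ (2⁻¹:ℝ)) + (n : ℝ≥0∞) * ENNReal.ofReal (α * τ⁻¹) := by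
          have hcard : (D.card : ℝ≥0∞) ≤ (n : ℝ≥0∞) := by
            exact_mod_cast le_trans (Finset.card_le_univ D) (by simp)
          exact add_le_add_right (mul_le_mul_left hcard _) _
      _ ≤ ENNReal.ofReal ((1 + n) * α ^ (2⁻¹:ℝ)) := by
          rw [← ENNReal.ofReal_natCast n, ← ENNReal.ofReal_mul (by positivity)]
          rw [← ENNReal.ofReal_add (by positivity) (by positivity)]
          apply ENNReal.ofReal_le_ofReal
          have : (n:ℝ) * (α * τ⁻¹) ≤ (n:ℝ) * α ^ (2⁻¹:ℝ) :=
            mul_le_mul_of_nonneg_left hατ (by positivity)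
          nlinarith [Real.rpow_pos_of_pos hα0 (2⁻¹:ℝ)]
  -- final arithmetic
  have hr0 : 0 ≤ (1 + (n:ℝ)) * α ^ (2⁻¹:ℝ) := by positivity
  have hrs : (1 + (n:ℝ)) * α ^ (2⁻¹:ℝ) < α ^ (5⁻¹:ℝ) := by
    have hsplit : α ^ (2⁻¹:ℝ) = α ^ (5⁻¹:ℝ) * α ^ ((3:ℝ)/10) := by
      rw [← Real.rpow_add hα0]; norm_num
    have hstep : α ^ ((3:ℝ)/10) < (n:ℝ) ^ (-(12/5 * Real.log n)) := by
      have h1 : α ^ ((3:ℝ)/10) < ((n:ℝ) ^ (-(8 * Real.log n))) ^ ((3:ℝ)/10) :=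
        Real.rpow_lt_rpow hα0.le hα1 (by norm_num)
      have h2 : ((n:ℝ) ^ (-(8 * Real.log n))) ^ ((3:ℝ)/10)
          = (n:ℝ) ^ (-(12/5 * Real.log n)) := by
        rw [← Real.rpow_mul hn0.le]
        congr 1
        ring
      rw [← h2]; exact h1
    have hbig : (1 + (n:ℝ)) * (n:ℝ) ^ (-(12/5 * Real.log n)) ≤ 1 := by
      have hnn : (1 + (n:ℝ)) ≤ (n:ℝ) ^ ((12/5 * Real.log n)) := by
        rw [Real.rpow_def_of_pos hn0]
        calc (1 + (n:ℝ)) ≤ Real.exp ((12/5) * (Real.log n)^2) := one_add_le_exp_sq_log hn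
          _ = Real.exp (Real.log n * (12/5 * Real.log n)) := by ring_nf
      calc (1 + (n:ℝ)) * (n:ℝ) ^ (-(12/5 * Real.log n))
          ≤ (n:ℝ) ^ ((12/5 * Real.log n)) * (n:ℝ) ^ (-(12/5 * Real.log n)) := by
            apply mul_le_mul_of_nonneg_right hnn (by positivity)
        _ = 1 := by rw [← Real.rpow_add hn0]; simp
    calc (1 + (n:ℝ)) * α ^ (2⁻¹:ℝ)
        = α ^ (5⁻¹:ℝ) * ((1 + (n:ℝ)) * α ^ ((3:ℝ)/10)) := by rw [hsplit]; ring
      _ < α ^ (5⁻¹:ℝ) * ((1 + (n:ℝ)) * (n:ℝ) ^ (-(12/5 * Real.log n))) := by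
          apply mul_lt_mul_of_pos_left _ (Real.rpow_pos_of_pos hα0 _)
          apply mul_lt_mul_of_pos_left hstep (by positivity)
      _ ≤ α ^ (5⁻¹:ℝ) * 1 := by
          apply mul_le_mul_of_nonneg_left hbig (Real.rpow_pos_of_pos hα0 _).le
      _ = α ^ (5⁻¹:ℝ) := mul_one _
  calc μ {ω | vnorm ((G ω)ᵀ.mulVec w) < α}
      ≤ μ (Φ ⁻¹' (Set.pi Set.univ fun _ : Fin d => A)) := measure_mono hsub
    _ = Measure.map Φ μ (Set.pi Set.univ fun _ : Fin d => A) :=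
        (Measure.map_apply hΦmeas (MeasurableSet.univ_pi fun _ => hAmeas)).symm
    _ = Measure.pi (fun _ : Fin d => νn) (Set.pi Set.univ fun _ : Fin d => A) := by
        rw [hjoint]
    _ = ∏ _j : Fin d, νn A := Measure.pi_pi _ _
    _ = νn A ^ d := by rw [Finset.prod_const, Finset.card_univ, Fintype.card_fin]
    _ ≤ ENNReal.ofReal ((1 + n) * α ^ (2⁻¹:ℝ)) ^ d := pow_le_pow_left' hcore d
    _ = ENNReal.ofReal (((1 + n) * α ^ (2⁻¹:ℝ)) ^ d) := (ENNReal.ofReal_pow hr0 d).symm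
    _ < ENNReal.ofReal (α ^ ((d:ℝ) / 5)) := by
        rw [ENNReal.ofReal_lt_ofReal_iff (Real.rpow_pos_of_pos hα0 _)]
        calc ((1 + (n:ℝ)) * α ^ (2⁻¹:ℝ)) ^ d < (α ^ (5⁻¹:ℝ)) ^ d := by
              apply pow_lt_pow_left₀ hrs hr0 hd0
          _ = α ^ ((d:ℝ) / 5) := by
              rw [← Real.rpow_natCast (α ^ (5⁻¹:ℝ)) d, ← Real.rpow_mul hα0.le]
              congr 1
              ring
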